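/- Let (x, y) be an ε-well-supported NE of the generalized matching-pennies game (I_m, −I_m) with ε ≤ 1/m. Then ‖x − u_m‖_∞ ≤ ε, i.e., no coordinate of x deviates from 1/m by more than ε. -/
import Mathlib


open Finset

def InSimplex {m : ℕ} (x : Fin m → ℝ) : Prop :=
  (∀ i, 0 ≤ x i) ∧ ∑ i, x i = 1

def IsWNE {m : ℕ} (R C : Matrix (Fin m) (Fin m) ℝ) (ε : ℝ)
    (x y : Fin m → ℝ) : Prop :=
  (∀ i, 0 < x i → ∀ k, (∑ j, R k j * y j) - ε ≤ ∑ j, R i j * y j) ∧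
  (∀ j, 0 < y j → ∀ k, (∑ i, x i * C i k) - ε ≤ ∑ i, x i * C i j)

/-- in every ε-WNE of generalized matching pennies (I_m, −I_m)
with ε ≤ 1/m, the row player's strategy is within ε of uniform in ℓ∞. -/
theorem matchingPennies_wne_linf {m : ℕ} (hm : 0 < m)
    (ε : ℝ) (hε0 : 0 ≤ ε) (hε : ε ≤ 1 / m)
    (x y : Fin m → ℝ) (hx : InSimplex x) (hy : InSimplex y)
    (h : IsWNE (1 : Matrix (Fin m) (Fin m) ℝ) (-(1 : Matrix (Fin m) (Fin m) ℝ)) ε x y) :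
    ∀ i, |x i - 1 / m| ≤ ε := by
  obtain ⟨hx0, hx1⟩ := hx
  obtain ⟨hy0, hy1⟩ := hy
  have hm' : (0:ℝ) < m := by exact_mod_cast hm
  have hR : ∀ i, ∑ j, (1 : Matrix (Fin m) (Fin m) ℝ) i j * y j = y i := by
    intro i; simp [Matrix.one_apply]
  have hC : ∀ j, ∑ i, x i * (-(1 : Matrix (Fin m) (Fin m) ℝ)) i j = -(x j) := by
    intro j; simp [Matrix.one_apply]
  have hrow : ∀ i, 0 < x i → ∀ k, y k - ε ≤ y i := by
    intro i hi k; have := h.1 i hi k; rwa [hR, hR] at this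
  have hcol : ∀ j, 0 < y j → ∀ k, x j ≤ x k + ε := by
    intro j hj k; have := h.2 j hj k; rw [hC, hC] at this; linarith
  intro i
  by_contra hcon
  push_neg at hcon
  rw [lt_abs] at hcon
  -- In either case, produce k with x k > 0 and y k = 0.
  have key : ∃ k, 0 < x k ∧ y k = 0 := by
    have hsum_const : ∑ _j : Fin m, (1 : ℝ)/m = 1 := by
      rw [Finset.sum_const, card_univ, Fintype.card_fin, nsmul_eq_mul]
      field_simp
    rcases hcon with h1 | h1
    · -- x i > 1/m + ε
      have hxi : 0 < x i := by
        have : (0:ℝ) < 1/m := by positivity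
        linarith
      refine ⟨i, hxi, ?_⟩
      by_contra hyi
      have hyi' : 0 < y i := lt_of_le_of_ne (hy0 i) (Ne.symm hyi)
      obtain ⟨j, -, hj⟩ : ∃ j ∈ univ, x j ≤ (1:ℝ)/m :=
        Finset.exists_le_of_sum_le ⟨i, mem_univ i⟩ (by rw [hx1, hsum_const])
      have := hcol i hyi' j
      linarith
    · -- x i < 1/m - ε
      obtain ⟨k, hk⟩ : ∃ k, (1:ℝ)/m < x k := by
        by_contra hall
        push_neg at hall
        have : ∑ j : Fin m, x j < ∑ _j : Fin m, (1:ℝ)/m :=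
          Finset.sum_lt_sum (fun j _ => hall j) ⟨i, mem_univ i, by linarith⟩
        rw [hx1, hsum_const] at this
        exact lt_irrefl _ this
      have hk0 : 0 < x k := by
        have : (0:ℝ) < 1/m := by positivity
        linarith
      refine ⟨k, hk0, ?_⟩
      by_contra hyk
      have hyk' : 0 < y k := lt_of_le_of_ne (hy0 k) (Ne.symm hyk)
      have := hcol k hyk' i
      linarith
  obtain ⟨k, hk0, hk⟩ := key
  have hyε : ∀ j, y j ≤ ε := by
    intro j
    have := hrow k hk0 j
    rw [hk] at this; linarith
  have hsum : ∑ j ∈ univ.erase k, y j = 1 := by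
    rw [Finset.sum_erase _ hk, hy1]
  have hcard : (univ.erase k).card = m - 1 := by
    rw [Finset.card_erase_of_mem (mem_univ k), card_univ, Fintype.card_fin]
  have hle : ∑ j ∈ univ.erase k, y j ≤ (m - 1 : ℕ) * ε := by
    calc ∑ j ∈ univ.erase k, y j ≤ (univ.erase k).card • ε :=
      Finset.sum_le_card_nsmul _ _ _ (fun j _ => hyε j)
    _ = (m - 1 : ℕ) * ε := by rw [hcard, nsmul_eq_mul]
  have hcast : ((m - 1 : ℕ) : ℝ) = (m : ℝ) - 1 := by
    rw [Nat.cast_sub hm, Nat.cast_one]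
  rw [hsum, hcast] at hle
  have : ((m:ℝ) - 1) * ε ≤ ((m:ℝ) - 1) * (1/m) := by
    apply mul_le_mul_of_nonneg_left hε
    have : (1:ℝ) ≤ m := by exact_mod_cast hm
    linarith
  have hlt : ((m:ℝ) - 1) * (1/m) < 1 := by
    rw [mul_one_div, div_lt_one hm']; linarith
  linarith
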